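/- Adversary counting lemma: suppose the codemaker answers each guess with the greedy strategy (scanning positions left to right, answering ✗ whenever the set of permutations consistent with all feedback so far remains nonempty, otherwise ✓). Then after any number r of rounds, the number of permutations of {1,…,n} consistent with all feedback equals the permanent of the tracking matrix A^{(r)}, where a^{(r)}_{ij} = 0 iff in some round ≤ r the guess had value j at position i and received answer ✗, and a^{(r)}_{ij} = 1 otherwise. -/
import Mathlib


attribute [local instance] Classical.propDecidable

namespace PG

variable {n : ℕ}

/-- Per-position exact-match feedback: `true` (✓) at `i` iff `x i = y i`. -/
def tau (x y : Fin n → Fin n) (i : Fin n) : Bool := decide (x i = y i)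

/-- A codebreaker strategy in the permutation game. -/
def PStrategy (n : ℕ) : Type :=
  List (Fin n → Bool) → (Fin n → Fin n)

/-- Feedback history after `r` rounds against secret `y`. -/
def phist (S : PStrategy n) (y : Fin n → Fin n) : ℕ → List (Fin n → Bool)
  | 0 => []
  | r + 1 => phist S y r ++ [tau (S (phist S y r)) y]

/-- The guess in round `r` (0-indexed). -/
def pguess (S : PStrategy n) (y : Fin n → Fin n) (r : ℕ) : Fin n → Fin n :=
  S (phist S y r)

/-- `S` wins within `m` rounds: for every secret permutation, some guess among
the first `m` equals the secret. -/
def PWinsIn (S : PStrategy n) (m : ℕ) : Prop :=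
  ∀ y : Equiv.Perm (Fin n), ∃ r < m, pguess S (⇑y) r = ⇑y

/-- `Gnum n`: the optimal worst-case number of rounds needed to guess a secret
permutation of `{1,…,n}` with per-position ✓/✗ feedback. -/
noncomputable def Gnum (n : ℕ) : ℕ :=
  sInf {m | ∃ S : PStrategy n, PWinsIn S m}

/-- A history of (guess, feedback) pairs. -/
abbrev Hist (n : ℕ) := List ((Fin n → Fin n) × (Fin n → Bool))

/-- A permutation is consistent with a history iff it satisfies every asserted
equality (✓) and inequality (✗). -/
def Consistent (H : Hist n) (σ : Equiv.Perm (Fin n)) : Prop :=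
  ∀ p ∈ H, ∀ i : Fin n, if p.2 i then p.1 i = σ i else p.1 i ≠ σ i

/-- A permutation satisfies a partial feedback list `g` (on the first
`g.length` positions) for guess `x`. -/
def PrefixOK (x : Fin n → Fin n) (g : List Bool) (σ : Equiv.Perm (Fin n)) : Prop :=
  ∀ (j : ℕ) (hg : j < g.length) (hn : j < n),
    if g.get ⟨j, hg⟩ then x ⟨j, hn⟩ = σ ⟨j, hn⟩ else x ⟨j, hn⟩ ≠ σ ⟨j, hn⟩

/-- Greedy adversary feedback on the first `j` positions: scanning left to
right, answer ✗ whenever some permutation consistent with the history and the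
partial feedback so far remains, otherwise ✓. -/
noncomputable def greedyAux (H : Hist n) (x : Fin n → Fin n) : ℕ → List Bool
  | 0 => []
  | j + 1 =>
    greedyAux H x j ++
      [if ∃ σ : Equiv.Perm (Fin n),
          Consistent H σ ∧ PrefixOK x (greedyAux H x j ++ [false]) σ
        then false else true]

/-- The full greedy feedback vector for guess `x` given history `H`. -/
noncomputable def gfb (H : Hist n) (x : Fin n → Fin n) (i : Fin n) : Bool :=
  (greedyAux H x n).getD i.val true

/-- The history after `r` rounds when the guesses are `xs 0, xs 1, …` and the
codemaker answers greedily. -/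
noncomputable def greedyHist (xs : ℕ → Fin n → Fin n) : ℕ → Hist n
  | 0 => []
  | r + 1 => greedyHist xs r ++ [(xs r, gfb (greedyHist xs r) (xs r))]

/-- The 0/1 tracking matrix of a history: entry `(i, j)` is `0` iff some guess
placed value `j` at position `i` and received answer ✗. -/
noncomputable def track (H : Hist n) : Matrix (Fin n) (Fin n) ℕ :=
  fun i j => if ∃ p ∈ H, p.1 i = j ∧ p.2 i = false then 0 else 1

end PG

namespace PG

variable {n : ℕ}

lemma greedyAux_length (H : Hist n) (x : Fin n → Fin n) (j : ℕ) :
    (greedyAux H x j).length = j := by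
  induction j with
  | zero => rfl
  | succ j ih => simp [greedyAux, ih]

lemma greedyAux_succ (H : Hist n) (x : Fin n → Fin n) (j : ℕ) :
    greedyAux H x (j + 1) = greedyAux H x j ++
      [if ∃ σ : Equiv.Perm (Fin n),
          Consistent H σ ∧ PrefixOK x (greedyAux H x j ++ [false]) σ
        then false else true] := rfl

lemma greedyAux_prefix (H : Hist n) (x : Fin n → Fin n) {a b : ℕ} (h : a ≤ b) :
    ∃ t, greedyAux H x b = greedyAux H x a ++ t := by
  induction b with
  | zero =>
    have : a = 0 := Nat.le_zero.mp h
    subst this; exact ⟨[], rfl⟩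
  | succ b ih =>
    rcases Nat.lt_or_ge a (b + 1) with h' | h'
    · obtain ⟨t, ht⟩ := ih (Nat.lt_succ_iff.mp h')
      refine ⟨t ++ [if ∃ σ : Equiv.Perm (Fin n),
          Consistent H σ ∧ PrefixOK x (greedyAux H x b ++ [false]) σ
        then false else true], ?_⟩
      rw [greedyAux_succ, ht, List.append_assoc]
    · have : a = b + 1 := le_antisymm h h'
      subst this; exact ⟨[], by simp⟩

lemma greedyAux_get (H : Hist n) (x : Fin n → Fin n) {j a b : ℕ}
    (hja : j < a) (hab : a ≤ b) (hb : j < (greedyAux H x b).length) (ha : j < (greedyAux H x a).length) :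
    (greedyAux H x b).get ⟨j, hb⟩ = (greedyAux H x a).get ⟨j, ha⟩ := by
  obtain ⟨t, ht⟩ := greedyAux_prefix H x hab
  simp only [List.get_eq_getElem]
  rw [List.getElem_of_eq ht, List.getElem_append_left ha]

lemma gfb_spec (H : Hist n) (x : Fin n → Fin n) (i : Fin n) :
    gfb H x i =
      if ∃ σ : Equiv.Perm (Fin n),
          Consistent H σ ∧ PrefixOK x (greedyAux H x i.val ++ [false]) σ
        then false else true := by
  unfold gfb
  have hn : i.val < (greedyAux H x n).length := by rw [greedyAux_length]; exact i.isLt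
  rw [List.getD_eq_getElem _ _ hn]
  have hs : i.val < (greedyAux H x (i.val + 1)).length := by
    rw [greedyAux_length]; omega
  have := greedyAux_get H x (Nat.lt_succ_self i.val) (Nat.succ_le_of_lt i.isLt) hn hs
  simp only [List.get_eq_getElem] at this
  rw [this]
  have hlen : (greedyAux H x i.val).length = i.val := greedyAux_length H x i.val
  rw [List.getElem_of_eq (greedyAux_succ H x i.val),
    List.getElem_append_right (by omega)]
  simp [hlen]

lemma track_of_consistent {H : Hist n} {σ : Equiv.Perm (Fin n)}
    (h : Consistent H σ) (i : Fin n) : track H i (σ i) = 1 := by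
  unfold track
  rw [if_neg]
  rintro ⟨p, hp, h1, h2⟩
  have := h p hp i
  rw [h2] at this
  simp only [Bool.false_eq_true, if_false] at this
  exact this h1

lemma track_mono {H : Hist n} {p : (Fin n → Fin n) × (Fin n → Bool)} {i j : Fin n}
    (h : track (H ++ [p]) i j = 1) : track H i j = 1 := by
  unfold track at h ⊢
  split at h
  next hcond => omega
  next hcond =>
    rw [if_neg]
    rintro ⟨q, hq, hq1, hq2⟩
    exact hcond ⟨q, by simp [hq], hq1, hq2⟩

lemma consistent_of_track (xs : ℕ → Fin n → Fin n) (r : ℕ) (σ : Equiv.Perm (Fin n))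
    (h : ∀ i, track (greedyHist xs r) i (σ i) = 1) :
    Consistent (greedyHist xs r) σ := by
  induction r with
  | zero => intro p hp; simp [greedyHist] at hp
  | succ r ih =>
    set H := greedyHist xs r with hH
    set x := xs r with hx
    set f := gfb H x with hf
    have hH1 : greedyHist xs (r + 1) = H ++ [(x, f)] := rfl
    rw [hH1] at h
    have hσ : Consistent H σ := ih (fun i => track_mono (h i))
    -- σ does not hit any ✗ entry of the new round
    have hnew : ∀ i : Fin n, f i = false → x i ≠ σ i := by
      intro i hfi hxi
      have := h i
      unfold track at this
      have hP : ∃ p ∈ H ++ [(x, f)], p.1 i = σ i ∧ p.2 i = false :=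
        ⟨(x, f), by simp, hxi, hfi⟩
      rw [if_pos hP] at this
      omega
    -- the inner induction
    have key : ∀ j : ℕ, PrefixOK x (greedyAux H x j) σ := by
      intro j
      induction j with
      | zero => intro k hg hn; simp [greedyAux] at hg
      | succ j ihj =>
        intro k hg hn
        have hlenj : (greedyAux H x j).length = j := greedyAux_length H x j
        have hg' : k < j + 1 := by
          have := hg; rw [greedyAux_length] at this; exact this
        rcases Nat.lt_or_ge k j with hk | hk
        · -- old position
          have hkj : k < (greedyAux H x j).length := by omega
          have hgeq : (greedyAux H x (j + 1)).get ⟨k, hg⟩ =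
              (greedyAux H x j).get ⟨k, hkj⟩ := by
            simp only [List.get_eq_getElem]
            rw [List.getElem_of_eq (greedyAux_succ H x j),
              List.getElem_append_left hkj]
          rw [hgeq]
          exact ihj k hkj hn
        · -- k = j : the new position
          have hkj : k = j := by omega
          subst hkj
          -- the new element
          have hget : (greedyAux H x (k + 1)).get ⟨k, hg⟩ =
              (if ∃ σ : Equiv.Perm (Fin n),
                  Consistent H σ ∧ PrefixOK x (greedyAux H x k ++ [false]) σ
                then false else true) := by
            simp only [List.get_eq_getElem]
            rw [List.getElem_of_eq (greedyAux_succ H x k),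
              List.getElem_append_right (by omega)]
            simp [hlenj]
          by_cases hC : ∃ σ : Equiv.Perm (Fin n),
              Consistent H σ ∧ PrefixOK x (greedyAux H x k ++ [false]) σ
          · -- answered ✗
            rw [hget, if_pos hC]
            simp only [Bool.false_eq_true, if_false]
            have hfk : f ⟨k, hn⟩ = false := by
              rw [hf, gfb_spec]
              simp only [Fin.val_mk]
              rw [if_pos hC]
            exact hnew ⟨k, hn⟩ hfk
          · -- answered ✓
            rw [hget, if_neg hC]
            simp only [if_true]
            by_contra hne
            apply hC
            refine ⟨σ, hσ, ?_⟩
            intro m hgm hmn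
            have hgm' : m < k + 1 := by
              have := hgm; rw [List.length_append, hlenj] at this; simpa using this
            rcases Nat.lt_or_ge m k with hm | hm
            · have hmj : m < (greedyAux H x k).length := by omega
              rw [List.get_eq_getElem, List.getElem_append_left hmj]
              have := ihj m hmj hmn
              simpa using this
            · have hmk : m = k := by omega
              subst hmk
              have : (greedyAux H x m ++ [false]).get ⟨m, hgm⟩ = false := by
                simp only [List.get_eq_getElem]
                rw [List.getElem_append_right (by omega)]
                simp [hlenj]
              rw [this]
              simp only [Bool.false_eq_true, if_false]
              exact hne
    -- conclude consistency with the appended round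
    rw [hH1]
    intro p hp i
    rcases List.mem_append.mp hp with hp | hp
    · exact hσ p hp i
    · have hpe : p = (x, f) := by simpa using hp
      subst hpe
      have hgn : (i : ℕ) < (greedyAux H x n).length := by
        rw [greedyAux_length]; exact i.isLt
      have := key n i.val hgn i.isLt
      have hfi : f i = (greedyAux H x n).get ⟨i.val, hgn⟩ := by
        rw [hf]; unfold gfb
        rw [List.getD_eq_getElem _ _ hgn]; rfl
      simp only [Fin.eta] at this
      show if f i = true then x i = σ i else x i ≠ σ i
      rw [hfi]
      exact this

end PG

/-- The permanent of a square matrix over ℕ. -/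
noncomputable def pm {n : ℕ} (A : Matrix (Fin n) (Fin n) ℕ) : ℕ :=
  ∑ σ : Equiv.Perm (Fin n), ∏ i, A i (σ i)

/-- Adversary counting lemma: against the greedy codemaker, after any number
`r` of rounds the number of consistent permutations equals the permanent of
the tracking matrix. -/
theorem stmt10 (n : ℕ) (xs : ℕ → Fin n → Fin n) (r : ℕ) :
    (Finset.univ.filter
      (fun σ : Equiv.Perm (Fin n) => PG.Consistent (PG.greedyHist xs r) σ)).card
      = pm (PG.track (PG.greedyHist xs r)) := by
  rw [Finset.card_filter]
  unfold pm
  refine Finset.sum_congr rfl fun σ _ => ?_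
  by_cases hc : PG.Consistent (PG.greedyHist xs r) σ
  · rw [if_pos hc]
    exact (Finset.prod_eq_one fun i _ => PG.track_of_consistent hc i).symm
  · rw [if_neg hc]
    have hex : ∃ i, PG.track (PG.greedyHist xs r) i (σ i) = 0 := by
      by_contra hne
      push_neg at hne
      refine hc (PG.consistent_of_track xs r σ fun i => ?_)
      have := hne i
      unfold PG.track at this ⊢
      by_cases hcond : ∃ p ∈ PG.greedyHist xs r, p.1 i = σ i ∧ p.2 i = false
      · exact absurd (if_pos hcond) this
      · rw [if_neg hcond]
    obtain ⟨i, hi⟩ := hex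
    exact (Finset.prod_eq_zero (Finset.mem_univ i) hi).symm
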